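/- arXiv:2404.08120 — 3 statements merged into one kernel-verified Lean document; each statement's English description precedes it below -/
import Mathlib

section
/- Let A be a d×d real matrix with spectral radius ρ(A) ≥ 1+ε_a for some ε_a > 0, and let C satisfy the strict observability condition that every eigenvector q of A has ‖Cq‖ ≥ ε_c‖q‖. Then for every integer t ≥ 0, the operator norm satisfies ‖CA^t‖ ≥ (1/√2)·ε_c·(1+ε_a)^t. -/
noncomputable def opNorm {𝕜 : Type*} [RCLike 𝕜] {m n : Type*} [Fintype m] [Fintype n]
    [DecidableEq n] (M : Matrix m n 𝕜) : ℝ :=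
  ‖LinearMap.toContinuousLinearMap (Matrix.toEuclideanLin M)‖

noncomputable def enormC {ι : Type*} [Fintype ι] (v : ι → ℂ) : ℝ :=
  Real.sqrt (∑ i, ‖v i‖ ^ 2)

lemma enormC_nonneg {ι : Type*} [Fintype ι] (v : ι → ℂ) : 0 ≤ enormC v :=
  Real.sqrt_nonneg _

lemma enormC_pos {ι : Type*} [Fintype ι] {v : ι → ℂ} (hv : v ≠ 0) : 0 < enormC v := by
  obtain ⟨i, hi⟩ : ∃ i, v i ≠ 0 := by
    by_contra h
    push_neg at h
    exact hv (funext h)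
  apply Real.sqrt_pos.mpr
  apply Finset.sum_pos' (fun j _ => by positivity)
  exact ⟨i, Finset.mem_univ i, pow_pos (norm_pos_iff.mpr hi) 2⟩

lemma enormC_smul {ι : Type*} [Fintype ι] (c : ℂ) (v : ι → ℂ) :
    enormC (c • v) = ‖c‖ * enormC v := by
  unfold enormC
  rw [← Real.sqrt_sq (norm_nonneg c), ← Real.sqrt_mul (by positivity),
    Finset.mul_sum]
  congr 1
  apply Finset.sum_congr rfl
  intro i _
  simp [Pi.smul_apply, map_mul, mul_pow]

lemma map_pow_ofReal {d : ℕ} (A : Matrix (Fin d) (Fin d) ℝ) (t : ℕ) :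
    (A ^ t).map Complex.ofReal = (A.map Complex.ofReal) ^ t := by
  induction t with
  | zero =>
    simp [pow_zero, Matrix.map_one Complex.ofReal Complex.ofReal_zero Complex.ofReal_one]
  | succ n ih =>
    rw [pow_succ, pow_succ, ← ih]
    exact Matrix.map_mul (f := Complex.ofRealHom)

lemma mulVec_pow_eig {d : ℕ} (M : Matrix (Fin d) (Fin d) ℂ) (lam : ℂ) (q : Fin d → ℂ)
    (h : M.mulVec q = lam • q) (t : ℕ) : (M ^ t).mulVec q = lam ^ t • q := by
  induction t with
  | zero => simp [Matrix.one_mulVec]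
  | succ n ih =>
    rw [pow_succ, ← Matrix.mulVec_mulVec, h, Matrix.mulVec_smul, ih, pow_succ,
      smul_smul, mul_comm]

lemma sqrt_mulVec_le_opNorm {d dy : ℕ} (M : Matrix (Fin dy) (Fin d) ℝ) (x : Fin d → ℝ) :
    Real.sqrt (∑ i, (M.mulVec x i) ^ 2) ≤ opNorm M * Real.sqrt (∑ i, (x i) ^ 2) := by
  set f := LinearMap.toContinuousLinearMap (Matrix.toEuclideanLin M)
  set x' : EuclideanSpace ℝ (Fin d) := (WithLp.equiv 2 (Fin d → ℝ)).symm x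
  have h := f.le_opNorm x'
  have hfx : f x' = (WithLp.equiv 2 (Fin dy → ℝ)).symm (M.mulVec x) := by
    simp [f, x', Matrix.toEuclideanLin_apply_piLp_toLp]
  have h1 : ‖f x'‖ = Real.sqrt (∑ i, (M.mulVec x i) ^ 2) := by
    rw [hfx, EuclideanSpace.norm_eq]
    congr 1
    apply Finset.sum_congr rfl
    intro i _
    rw [Real.norm_eq_abs, sq_abs]
    rfl
  have h2 : ‖x'‖ = Real.sqrt (∑ i, (x i) ^ 2) := by
    rw [EuclideanSpace.norm_eq]
    congr 1
    apply Finset.sum_congr rfl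
    intro i _
    rw [Real.norm_eq_abs, sq_abs]
    rfl
  rw [h1, h2] at h
  exact h

lemma enormC_mulVec_split {dy d : ℕ} (M : Matrix (Fin dy) (Fin d) ℝ) (q : Fin d → ℂ) :
    ∑ i, ‖(M.map Complex.ofReal).mulVec q i‖ ^ 2
      = ∑ i, (M.mulVec (fun j => (q j).re) i) ^ 2
        + ∑ i, (M.mulVec (fun j => (q j).im) i) ^ 2 := by
  rw [← Finset.sum_add_distrib]
  apply Finset.sum_congr rfl
  intro i _
  have hre : ((M.map Complex.ofReal).mulVec q i).re = M.mulVec (fun j => (q j).re) i := by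
    simp only [Matrix.mulVec, dotProduct, Matrix.map_apply, Complex.re_sum]
    apply Finset.sum_congr rfl
    intro j _
    simp [Complex.mul_re]
  have him : ((M.map Complex.ofReal).mulVec q i).im = M.mulVec (fun j => (q j).im) i := by
    simp only [Matrix.mulVec, dotProduct, Matrix.map_apply, Complex.im_sum]
    apply Finset.sum_congr rfl
    intro j _
    simp [Complex.mul_im]
  rw [Complex.sq_norm, Complex.normSq_apply, hre, him]
  ring

lemma enormC_sq_split {d : ℕ} (q : Fin d → ℂ) :
    ∑ i, ‖q i‖ ^ 2
      = ∑ i, ((q i).re) ^ 2 + ∑ i, ((q i).im) ^ 2 := by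
  rw [← Finset.sum_add_distrib]
  apply Finset.sum_congr rfl
  intro i _
  rw [Complex.sq_norm, Complex.normSq_apply]
  ring

/-- If `ρ(A) ≥ 1 + ε_a` and every (complex) eigenvector `q` of `A` satisfies
`‖Cq‖ ≥ ε_c ‖q‖`, then for every `t ≥ 0`, `‖C A^t‖ ≥ (1/√2) ε_c (1+ε_a)^t`. -/
theorem stmt_2 {d dy : ℕ} (A : Matrix (Fin d) (Fin d) ℝ) (C : Matrix (Fin dy) (Fin d) ℝ)
    (εa εc : ℝ) (hεa : 0 < εa) (hεc : 0 < εc)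
    (hρ : ENNReal.ofReal (1 + εa) ≤ spectralRadius ℂ (A.map Complex.ofReal))
    (hobs : ∀ (lam : ℂ) (q : Fin d → ℂ), q ≠ 0 →
      (A.map Complex.ofReal).mulVec q = lam • q →
      εc * enormC q ≤ enormC ((C.map Complex.ofReal).mulVec q)) :
    ∀ t : ℕ, (1 / Real.sqrt 2) * εc * (1 + εa) ^ t ≤ opNorm (C * A ^ t) := by
  set Aℂ := A.map Complex.ofReal with hAℂ
  -- spectrum is finite and nonempty
  have hfin : (spectrum ℂ Aℂ).Finite := Aℂ.finite_spectrum
  have hne : (spectrum ℂ Aℂ).Nonempty := by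
    by_contra h
    rw [Set.not_nonempty_iff_eq_empty] at h
    have h0 : spectralRadius ℂ Aℂ = 0 := by
      simp [spectralRadius, h]
    rw [h0, nonpos_iff_eq_zero, ENNReal.ofReal_eq_zero] at hρ
    linarith
  -- get a spectral-radius-attaining eigenvalue
  obtain ⟨lam, hlam_mem', hmax⟩ :=
    hfin.toFinset.exists_max_image (fun z => ‖z‖) (by simpa using hne)
  have hlam_mem : lam ∈ spectrum ℂ Aℂ := hfin.mem_toFinset.mp hlam_mem'
  have hsr : spectralRadius ℂ Aℂ ≤ (‖lam‖₊ : ENNReal) := by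
    apply iSup₂_le
    intro z hz
    have : ‖z‖ ≤ ‖lam‖ := hmax z (hfin.mem_toFinset.mpr hz)
    exact_mod_cast this
  have hlam : 1 + εa ≤ ‖lam‖ := by
    have := hρ.trans hsr
    rw [← enorm_eq_nnnorm, ← ofReal_norm,
      ENNReal.ofReal_le_ofReal_iff (norm_nonneg _)] at this
    simpa using this
  -- eigenvector
  have hmem : Module.End.HasEigenvalue (Matrix.toLinAlgEquiv' Aℂ) lam := by
    rw [Module.End.hasEigenvalue_iff_mem_spectrum, AlgEquiv.spectrum_eq]
    exact hlam_mem
  obtain ⟨q, hq⟩ := hmem.exists_hasEigenvector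
  have hq0 : q ≠ 0 := hq.right
  have heig : Aℂ.mulVec q = lam • q := by
    have := hq.apply_eq_smul
    rwa [Matrix.toLinAlgEquiv'_apply] at this
  have hCq := hobs lam q hq0 heig
  have hq_pos : 0 < enormC q := enormC_pos hq0
  intro t
  set M := C * A ^ t with hM
  set x : Fin d → ℝ := fun j => (q j).re
  set y : Fin d → ℝ := fun j => (q j).im
  -- (C A^t)_ℂ q = lam^t • (C_ℂ q)
  have hMq : (M.map Complex.ofReal).mulVec q
      = lam ^ t • ((C.map Complex.ofReal).mulVec q) := by
    have hmul : (C * A ^ t).map Complex.ofReal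
        = C.map Complex.ofReal * (A ^ t).map Complex.ofReal :=
      Matrix.map_mul (f := Complex.ofRealHom)
    rw [hM, hmul, ← Matrix.mulVec_mulVec]
    have h2 : ((A ^ t).map Complex.ofReal).mulVec q = lam ^ t • q := by
      rw [map_pow_ofReal]
      exact mulVec_pow_eig Aℂ lam q heig t
    rw [h2, Matrix.mulVec_smul]
  -- lower bound on enormC of the image
  have hlow : (1 + εa) ^ t * (εc * enormC q)
      ≤ enormC ((M.map Complex.ofReal).mulVec q) := by
    rw [hMq, enormC_smul]
    have habs : (1 + εa) ^ t ≤ ‖lam ^ t‖ := by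
      rw [norm_pow]
      exact pow_le_pow_left₀ (by linarith) hlam t
    have h1 : (1 + εa) ^ t * (εc * enormC q)
        ≤ (1 + εa) ^ t * enormC ((C.map Complex.ofReal).mulVec q) := by
      apply mul_le_mul_of_nonneg_left hCq (by positivity)
    refine h1.trans ?_
    apply mul_le_mul_of_nonneg_right habs (enormC_nonneg _)
  -- upper bound via opNorm
  have hupper : enormC ((M.map Complex.ofReal).mulVec q) ≤ opNorm M * enormC q := by
    have hb1 := sqrt_mulVec_le_opNorm M x
    have hb2 := sqrt_mulVec_le_opNorm M y
    have hN : (0 : ℝ) ≤ opNorm M := norm_nonneg _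
    have ha1 : ∑ i, (M.mulVec x i) ^ 2 ≤ opNorm M ^ 2 * ∑ i, (x i) ^ 2 := by
      have := mul_self_le_mul_self (Real.sqrt_nonneg _) hb1
      rw [Real.mul_self_sqrt (by positivity), mul_mul_mul_comm,
        Real.mul_self_sqrt (by positivity)] at this
      calc ∑ i, (M.mulVec x i) ^ 2
          ≤ opNorm M * opNorm M * (∑ i, (x i) ^ 2) := this
        _ = opNorm M ^ 2 * ∑ i, (x i) ^ 2 := by ring
    have ha2 : ∑ i, (M.mulVec y i) ^ 2 ≤ opNorm M ^ 2 * ∑ i, (y i) ^ 2 := by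
      have := mul_self_le_mul_self (Real.sqrt_nonneg _) hb2
      rw [Real.mul_self_sqrt (by positivity), mul_mul_mul_comm,
        Real.mul_self_sqrt (by positivity)] at this
      calc ∑ i, (M.mulVec y i) ^ 2
          ≤ opNorm M * opNorm M * (∑ i, (y i) ^ 2) := this
        _ = opNorm M ^ 2 * ∑ i, (y i) ^ 2 := by ring
    unfold enormC
    rw [enormC_mulVec_split]
    have hsum : ∑ i, (M.mulVec x i) ^ 2 + ∑ i, (M.mulVec y i) ^ 2
        ≤ opNorm M ^ 2 * (∑ i, (x i) ^ 2 + ∑ i, (y i) ^ 2) := by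
      rw [mul_add]; exact add_le_add ha1 ha2
    calc Real.sqrt (∑ i, (M.mulVec x i) ^ 2 + ∑ i, (M.mulVec y i) ^ 2)
        ≤ Real.sqrt (opNorm M ^ 2 * (∑ i, (x i) ^ 2 + ∑ i, (y i) ^ 2)) :=
          Real.sqrt_le_sqrt hsum
      _ = opNorm M * Real.sqrt (∑ i, (x i) ^ 2 + ∑ i, (y i) ^ 2) := by
          rw [Real.sqrt_mul (by positivity), Real.sqrt_sq hN]
      _ = opNorm M * Real.sqrt (∑ i, ‖q i‖ ^ 2) := by
          rw [enormC_sq_split]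
  -- combine
  have hkey : εc * (1 + εa) ^ t ≤ opNorm M := by
    have h := hlow.trans hupper
    have h' : εc * (1 + εa) ^ t * enormC q ≤ opNorm M * enormC q := by
      calc εc * (1 + εa) ^ t * enormC q
          = (1 + εa) ^ t * (εc * enormC q) := by ring
        _ ≤ opNorm M * enormC q := h
    exact le_of_mul_le_mul_right h' hq_pos
  have hfrac : 1 / Real.sqrt 2 ≤ 1 := by
    rw [div_le_one (by positivity)]
    nlinarith [Real.sq_sqrt (by norm_num : (2:ℝ) ≥ 0), Real.sqrt_nonneg 2]
  calc (1 / Real.sqrt 2) * εc * (1 + εa) ^ t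
      ≤ 1 * (εc * (1 + εa) ^ t) := by
        rw [mul_assoc]
        apply mul_le_mul_of_nonneg_right hfrac (by positivity)
    _ = εc * (1 + εa) ^ t := by ring
    _ ≤ opNorm M := hkey
end

section
/- Let A ∈ ℝ^{d×d} be stable, B ∈ ℝ^{d×d_u}, and P the solution of AᵀPA − P + CᵀC = 0. With T_{τ−1} the block Toeplitz matrix with blocks CA^{j−i}, and D = diag(B,…,B) (τ−1 copies), we have tr(Dᵀ T_{τ−1}ᵀ T_{τ−1} D) ≤ τ · tr(Bᵀ P B). -/
open Matrix

open Filter Topology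



attribute [local instance] Matrix.linftyOpNormedRing Matrix.linftyOpNormedAlgebra

lemma norm_tendsto {d : ℕ} (M : Matrix (Fin d) (Fin d) ℂ)
    (hρ : spectralRadius ℂ M < 1) :
    Tendsto (fun n => ‖M ^ n‖) atTop (𝓝 0) := by
  have : CompleteSpace (Matrix (Fin d) (Fin d) ℂ) :=
    inferInstanceAs (CompleteSpace (Fin d → Fin d → ℂ))
  have h := spectrum.pow_nnnorm_pow_one_div_tendsto_nhds_spectralRadius M
  obtain ⟨r, hr1, hr2⟩ := exists_between hρ
  have hev : ∀ᶠ n : ℕ in atTop, (‖M ^ n‖₊ : ENNReal) ^ (1 / (n:ℝ)) < r :=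
    h.eventually_lt_const hr1
  have hrtop : r ≠ ⊤ := (hr2.trans_le le_top).ne
  have hkey : ∀ᶠ n in atTop, ‖M ^ n‖ ≤ r.toReal ^ n := by
    filter_upwards [hev, eventually_ge_atTop 1] with n hn hn1
    have hne : (n : ℝ) ≠ 0 := by positivity
    have h2 : ((‖M ^ n‖₊ : ENNReal) ^ (1 / (n:ℝ))) ^ (n:ℝ) < r ^ (n:ℝ) :=
      ENNReal.rpow_lt_rpow hn (by positivity)
    rw [← ENNReal.rpow_mul, one_div_mul_cancel hne, ENNReal.rpow_one] at h2
    have h3 : (‖M ^ n‖₊ : ENNReal) ≤ r ^ (n : ℕ) := by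
      rw [← ENNReal.rpow_natCast]; exact h2.le
    have := ENNReal.toReal_mono (by simp [ENNReal.pow_ne_top hrtop]) h3
    simpa [ENNReal.toReal_pow] using this
  have hc : r.toReal < 1 := by
    have := ENNReal.toReal_mono (by simp) hr2.le
    rcases lt_or_eq_of_le this with h | h
    · simpa using h
    · exfalso
      have : r = 1 := by
        have := ENNReal.toReal_eq_one_iff r |>.mp (by simpa using h)
        exact this
      exact hr2.ne this
  have hc0 : 0 ≤ r.toReal := ENNReal.toReal_nonneg
  have hpow : Tendsto (fun n => r.toReal ^ n) atTop (𝓝 0) :=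
    tendsto_pow_atTop_nhds_zero_of_lt_one hc0 hc
  exact squeeze_zero_norm' (by filter_upwards [hkey] with n hn; simpa using hn) hpow

lemma entry_le_norm {d : ℕ} (N : Matrix (Fin d) (Fin d) ℂ) (i j : Fin d) :
    ‖N i j‖ ≤ ‖N‖ := by
  have h : ‖N i j‖₊ ≤ ‖N‖₊ := by
    rw [Matrix.linfty_opNNNorm_def]
    calc ‖N i j‖₊ ≤ ∑ k, ‖N i k‖₊ :=
          Finset.single_le_sum (f := fun k => ‖N i k‖₊) (fun k _ => zero_le) (Finset.mem_univ j)
    _ ≤ _ := Finset.le_sup (f := fun r => ∑ k, ‖N r k‖₊) (Finset.mem_univ i)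
  exact_mod_cast h

lemma entries_tendsto {d : ℕ} (A : Matrix (Fin d) (Fin d) ℝ)
    (hρ : spectralRadius ℂ (A.map Complex.ofReal) < 1) (i j : Fin d) :
    Tendsto (fun n => (A ^ n) i j) atTop (𝓝 0) := by
  have h := norm_tendsto _ hρ
  apply squeeze_zero_norm' _ h
  filter_upwards with n
  have hmap : (A.map Complex.ofReal) ^ n = (A ^ n).map Complex.ofReal := by
    have : A.map Complex.ofReal = Complex.ofRealHom.mapMatrix A := rfl
    rw [this, ← map_pow]; rfl
  calc ‖(A ^ n) i j‖ = ‖((A.map Complex.ofReal) ^ n) i j‖ := by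
        rw [hmap]; simp [Matrix.map_apply, Complex.norm_real]
  _ ≤ _ := entry_le_norm _ i j

section
variable {d dy du : ℕ} (A : Matrix (Fin d) (Fin d) ℝ) (C : Matrix (Fin dy) (Fin d) ℝ)

/-- partial Gram sum -/
noncomputable def gmat (n : ℕ) : Matrix (Fin d) (Fin d) ℝ :=
  ∑ k ∈ Finset.range (n + 1), (Aᵀ) ^ k * (Cᵀ * C) * A ^ k

lemma lyap_iter (P : Matrix (Fin d) (Fin d) ℝ) (h0 : Aᵀ * P * A + Cᵀ * C = P) :
    ∀ n, P = gmat A C n + (Aᵀ) ^ (n + 1) * P * A ^ (n + 1) := by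
  intro n
  induction n with
  | zero =>
    simp only [gmat, zero_add, Finset.sum_range_one, pow_zero, pow_one, one_mul, mul_one]
    conv_lhs => rw [← h0]
    exact add_comm (Aᵀ * P * A) (Cᵀ * C)
  | succ n ih =>
    have key : Aᵀ ^ (n+1) * (Aᵀ * P * A) * A ^ (n+1) = Aᵀ ^ (n+1+1) * P * A ^ (n+1+1) := by
      calc Aᵀ ^ (n+1) * (Aᵀ * P * A) * A ^ (n+1)
          = Aᵀ ^ (n+1) * Aᵀ * P * (A * A ^ (n+1)) := by simp only [mul_assoc]
      _ = _ := by rw [← pow_succ, ← pow_succ']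
    rw [gmat, Finset.sum_range_succ, ← gmat]
    calc P = gmat A C n + (Aᵀ) ^ (n + 1) * P * A ^ (n + 1) := ih
    _ = gmat A C n + (Aᵀ) ^ (n + 1) * (Aᵀ * P * A + Cᵀ * C) * A ^ (n + 1) := by rw [h0]
    _ = _ := by rw [mul_add, add_mul, key]; abel

lemma qf_term_nonneg (k : ℕ) (x : Fin d → ℝ) :
    0 ≤ x ⬝ᵥ ((Aᵀ ^ k * (Cᵀ * C) * A ^ k) *ᵥ x) := by
  have h : Aᵀ ^ k * (Cᵀ * C) * A ^ k = (C * A ^ k)ᵀ * (C * A ^ k) := by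
    simp only [transpose_mul, transpose_pow, Matrix.mul_assoc]
  rw [h, ← Matrix.mulVec_mulVec, Matrix.dotProduct_mulVec, Matrix.vecMul_transpose]
  exact Finset.sum_nonneg fun i _ => mul_self_nonneg _

lemma qf_gmat_nonneg (n : ℕ) (x : Fin d → ℝ) : 0 ≤ x ⬝ᵥ (gmat A C n *ᵥ x) := by
  induction n with
  | zero =>
    rw [gmat, Finset.sum_range_one]; exact qf_term_nonneg A C 0 x
  | succ n ih =>
    rw [gmat, Finset.sum_range_succ, ← gmat, Matrix.add_mulVec, dotProduct_add]
    exact add_nonneg ih (qf_term_nonneg A C (n+1) x)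

end

section
variable {d dy du : ℕ}

lemma qf_P_nonneg (A : Matrix (Fin d) (Fin d) ℝ) (C : Matrix (Fin dy) (Fin d) ℝ)
    (P : Matrix (Fin d) (Fin d) ℝ)
    (hρ : spectralRadius ℂ (A.map Complex.ofReal) < 1)
    (h0 : Aᵀ * P * A + Cᵀ * C = P) (x : Fin d → ℝ) : 0 ≤ x ⬝ᵥ (P *ᵥ x) := by
  have hv : ∀ a : Fin d, Tendsto (fun n => ((A ^ (n+1)) *ᵥ x) a) atTop (𝓝 0) := by
    intro a
    simp only [Matrix.mulVec, dotProduct]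
    have := tendsto_finset_sum Finset.univ (fun j (_ : j ∈ Finset.univ) =>
      ((entries_tendsto A hρ a j).comp (tendsto_add_atTop_nat 1)).mul_const (x j))
    simpa using this
  set q : ℕ → ℝ := fun n => ((A ^ (n+1)) *ᵥ x) ⬝ᵥ (P *ᵥ ((A ^ (n+1)) *ᵥ x)) with hqdef
  have hq0 : Tendsto q atTop (𝓝 0) := by
    have hrw : ∀ n, q n = ∑ a, ((A ^ (n+1)) *ᵥ x) a * (∑ b, P a b * ((A ^ (n+1)) *ᵥ x) b) := by
      intro n
      simp only [hqdef, dotProduct, Matrix.mulVec]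
    rw [funext hrw]
    have := tendsto_finset_sum Finset.univ (fun a (_ : a ∈ Finset.univ) =>
      (hv a).mul (tendsto_finset_sum Finset.univ
        (fun b (_ : b ∈ Finset.univ) => (tendsto_const_nhds (x := P a b)).mul (hv b))))
    simpa using this
  have hid : ∀ n, x ⬝ᵥ (P *ᵥ x) = x ⬝ᵥ (gmat A C n *ᵥ x) + q n := by
    intro n
    have h1 := lyap_iter A C P h0 n
    have h2 : ((Aᵀ) ^ (n+1) * P * A ^ (n+1)) *ᵥ x
        = (Aᵀ) ^ (n+1) *ᵥ (P *ᵥ (A ^ (n+1) *ᵥ x)) := by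
      rw [Matrix.mulVec_mulVec, Matrix.mulVec_mulVec]
    have h3 : x ⬝ᵥ (((Aᵀ) ^ (n+1) * P * A ^ (n+1)) *ᵥ x) = q n := by
      rw [h2, ← transpose_pow, Matrix.dotProduct_mulVec, Matrix.vecMul_transpose]
    conv_lhs => rw [h1]
    rw [Matrix.add_mulVec, dotProduct_add, h3]
  have hle : ∀ n, q n ≤ x ⬝ᵥ (P *ᵥ x) := by
    intro n
    have := qf_gmat_nonneg A C n x
    rw [hid n]; linarith
  exact le_of_tendsto' hq0 hle

lemma trace_qf_nonneg {k : ℕ} (M : Matrix (Fin d) (Fin d) ℝ)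
    (hM : ∀ x, 0 ≤ x ⬝ᵥ (M *ᵥ x)) (N : Matrix (Fin d) (Fin k) ℝ) :
    0 ≤ (Nᵀ * M * N).trace := by
  have hcc : ∀ c, (Nᵀ * M * N) c c = (fun a => N a c) ⬝ᵥ (M *ᵥ fun a => N a c) := by
    intro c
    simp only [Matrix.mul_apply, Matrix.transpose_apply, dotProduct, Matrix.mulVec,
      Finset.sum_mul, Finset.mul_sum]
    rw [Finset.sum_comm]
    apply Finset.sum_congr rfl; intros; apply Finset.sum_congr rfl; intros; ring
  rw [Matrix.trace]
  exact Finset.sum_nonneg fun c _ => by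
    rw [Matrix.diag_apply, hcc c]; exact hM _

lemma trace_transpose_mul_self {m n : Type*} [Fintype m] [Fintype n] (N : Matrix m n ℝ) :
    (Nᵀ * N).trace = ∑ q, ∑ p, (N p q)^2 := by
  simp [Matrix.trace, Matrix.diag, Matrix.mul_apply, sq]

lemma gram_trace_eq (A : Matrix (Fin d) (Fin d) ℝ) (C : Matrix (Fin dy) (Fin d) ℝ)
    (B : Matrix (Fin d) (Fin du) ℝ) (n : ℕ) :
    ∑ k ∈ Finset.range (n+1), ((C * A ^ k * B)ᵀ * (C * A ^ k * B)).trace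
      = (Bᵀ * gmat A C n * B).trace := by
  have h1 : ∀ k, (C * A ^ k * B)ᵀ * (C * A ^ k * B)
      = Bᵀ * ((Aᵀ) ^ k * (Cᵀ * C) * A ^ k) * B := by
    intro k
    simp only [transpose_mul, transpose_pow, Matrix.mul_assoc]
  simp_rw [h1]
  rw [gmat, Matrix.mul_sum, Matrix.sum_mul, Matrix.trace_sum]

lemma gram_trace_le (A : Matrix (Fin d) (Fin d) ℝ) (C : Matrix (Fin dy) (Fin d) ℝ)
    (B : Matrix (Fin d) (Fin du) ℝ) (P : Matrix (Fin d) (Fin d) ℝ)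
    (hρ : spectralRadius ℂ (A.map Complex.ofReal) < 1)
    (h0 : Aᵀ * P * A + Cᵀ * C = P) (n : ℕ) :
    (Bᵀ * gmat A C n * B).trace ≤ (Bᵀ * P * B).trace := by
  have h1 := lyap_iter A C P h0 n
  have h2 : Bᵀ * ((Aᵀ) ^ (n+1) * P * A ^ (n+1)) * B
      = (A ^ (n+1) * B)ᵀ * P * (A ^ (n+1) * B) := by
    simp only [transpose_mul, transpose_pow, Matrix.mul_assoc]
  have hsplit : Bᵀ * P * B
      = Bᵀ * gmat A C n * B + (A ^ (n+1) * B)ᵀ * P * (A ^ (n+1) * B) := by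
    conv_lhs => rw [h1]
    rw [Matrix.mul_add, Matrix.add_mul, h2]
  have hpos := trace_qf_nonneg P (qf_P_nonneg A C P hρ h0) (A ^ (n+1) * B)
  rw [hsplit, Matrix.trace_add]
  linarith

end


/-- For stable `A`, input matrix `B`, and Lyapunov solution `P` (`AᵀPA − P + CᵀC = 0`), with
`T_{τ−1}` the block upper-triangular Toeplitz matrix with blocks `C A^{j−i}` and
`D = diag(B,…,B)` (`τ−1` copies), we have `tr(Dᵀ T_{τ−1}ᵀ T_{τ−1} D) ≤ τ · tr(Bᵀ P B)`. -/
theorem stmt_5 {d dy du : ℕ} (A : Matrix (Fin d) (Fin d) ℝ) (B : Matrix (Fin d) (Fin du) ℝ)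
    (C : Matrix (Fin dy) (Fin d) ℝ) (P : Matrix (Fin d) (Fin d) ℝ)
    (hρ : spectralRadius ℂ (A.map Complex.ofReal) < 1)
    (hLyap : Aᵀ * P * A - P + Cᵀ * C = 0)
    (τ : ℕ) (hτ : 2 ≤ τ)
    (T : Matrix (Fin τ × Fin dy) (Fin (τ - 1) × Fin d) ℝ)
    (hT : T = Matrix.of fun p q =>
      if (p.1 : ℕ) ≤ (q.1 : ℕ) then (C * A ^ ((q.1 : ℕ) - (p.1 : ℕ))) p.2 q.2 else 0)
    (D : Matrix (Fin (τ - 1) × Fin d) (Fin (τ - 1) × Fin du) ℝ)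
    (hD : D = Matrix.of fun p q => if p.1 = q.1 then B p.2 q.2 else 0) :
    (Dᵀ * Tᵀ * T * D).trace ≤ (τ : ℝ) * (Bᵀ * P * B).trace := by
  have h0 : Aᵀ * P * A + Cᵀ * C = P := by
    rw [sub_add_eq_add_sub, sub_eq_zero] at hLyap
    exact hLyap
  -- the entries of T * D
  have hN : ∀ (p : Fin τ × Fin dy) (q : Fin (τ - 1) × Fin du),
      (T * D) p q = if (p.1 : ℕ) ≤ (q.1 : ℕ)
        then (C * A ^ ((q.1 : ℕ) - (p.1 : ℕ)) * B) p.2 q.2 else 0 := by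
    intro p q
    rw [hT, hD, Matrix.mul_apply, Fintype.sum_prod_type]
    rw [Finset.sum_eq_single q.1]
    · by_cases hc : (p.1 : ℕ) ≤ (q.1 : ℕ)
      · simp [hc, Matrix.mul_apply]
      · simp [hc]
    · intro j' _ hj'
      simp [hj']
    · intro h; exact absurd (Finset.mem_univ _) h
  -- rewrite the trace as a double sum of squares
  have hM : Dᵀ * Tᵀ * T * D = (T * D)ᵀ * (T * D) := by
    rw [transpose_mul]; simp only [Matrix.mul_assoc]
  rw [hM, trace_transpose_mul_self]
  -- per-column-block computation
  set s : ℕ → ℝ := fun e => ((C * A ^ e * B)ᵀ * (C * A ^ e * B)).trace with hsdef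
  have hs : ∀ e, s e = ∑ u, ∑ y, ((C * A ^ e * B) y u)^2 :=
    fun e => trace_transpose_mul_self _
  have hcol : ∀ j : Fin (τ - 1),
      (∑ u : Fin du, ∑ p : Fin τ × Fin dy, ((T * D) p (j, u))^2)
        = (Bᵀ * gmat A C (j : ℕ) * B).trace := by
    intro j
    have hj1 : (j : ℕ) + 1 ≤ τ := by omega
    calc ∑ u : Fin du, ∑ p : Fin τ × Fin dy, ((T * D) p (j, u))^2
        = ∑ u : Fin du, ∑ i : Fin τ, ∑ y : Fin dy,
            (if (i : ℕ) ≤ (j : ℕ) then (C * A ^ ((j : ℕ) - (i : ℕ)) * B) y u else 0)^2 := by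
          apply Finset.sum_congr rfl; intro u _
          rw [Fintype.sum_prod_type]
          apply Finset.sum_congr rfl; intro i _
          apply Finset.sum_congr rfl; intro y _
          rw [hN (i, y) (j, u)]
    _ = ∑ i : Fin τ, (if (i : ℕ) ≤ (j : ℕ) then s ((j : ℕ) - (i : ℕ)) else 0) := by
          rw [Finset.sum_comm]
          apply Finset.sum_congr rfl; intro i _
          by_cases hc : (i : ℕ) ≤ (j : ℕ)
          · simp only [hc, if_true, hs]
          · simp [hc]
    _ = ∑ i ∈ Finset.range τ, (if i ≤ (j : ℕ) then s ((j : ℕ) - i) else 0) := by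
          exact (Finset.sum_range fun i => if i ≤ (j : ℕ) then s ((j : ℕ) - i) else 0).symm
    _ = ∑ i ∈ Finset.range ((j : ℕ) + 1), s ((j : ℕ) - i) := by
          rw [← Finset.sum_subset (Finset.range_subset_range.mpr hj1)]
          · apply Finset.sum_congr rfl; intro i hi
            rw [if_pos (Nat.lt_succ_iff.mp (Finset.mem_range.mp hi))]
          · intro i _ hi
            have hni : ¬ i ≤ (j : ℕ) := fun h => hi (Finset.mem_range.mpr (Nat.lt_succ_of_le h))
            rw [if_neg hni]
    _ = ∑ k ∈ Finset.range ((j : ℕ) + 1), s k := by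
          simpa using Finset.sum_range_reflect s ((j : ℕ) + 1)
    _ = (Bᵀ * gmat A C (j : ℕ) * B).trace := gram_trace_eq A C B (j : ℕ)
  rw [Fintype.sum_prod_type]
  calc ∑ j : Fin (τ - 1), ∑ u : Fin du, ∑ p : Fin τ × Fin dy, ((T * D) p (j, u))^2
      = ∑ j : Fin (τ - 1), (Bᵀ * gmat A C (j : ℕ) * B).trace :=
        Finset.sum_congr rfl fun j _ => hcol j
  _ ≤ ∑ _j : Fin (τ - 1), (Bᵀ * P * B).trace :=
        Finset.sum_le_sum fun j _ => gram_trace_le A C B P hρ h0 (j : ℕ)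
  _ = ((τ - 1 : ℕ) : ℝ) * (Bᵀ * P * B).trace := by
        rw [Finset.sum_const, Finset.card_univ, Fintype.card_fin, nsmul_eq_mul]
  _ ≤ (τ : ℝ) * (Bᵀ * P * B).trace := by
        have h1 : 0 ≤ (Bᵀ * P * B).trace := trace_qf_nonneg P (qf_P_nonneg A C P hρ h0) B
        have h2 : ((τ - 1 : ℕ) : ℝ) ≤ (τ : ℝ) := by exact_mod_cast Nat.sub_le τ 1
        exact mul_le_mul_of_nonneg_right h2 h1
end

section
/- Let (Z_t)_{t≥1} be a sequence of real random variables adapted to a filtration (F_t) satisfying the (1, v, q)-block martingale small-ball property: Pr(Z_{t+1}² > v² | F_t) ≥ q almost surely for all t ≥ 0. Then for every T ≥ 1, Pr(Σ_{t=1}^{T} Z_t² ≤ v²q²T/8) ≤ exp(−Tq²/8). -/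
open MeasureTheory

/-- BMSB anti-concentration (block size 1): if `(Z_t)_{t≥1}` is adapted to `(ℱ_t)` and
`Pr(Z_{t+1}² > v² | ℱ_t) ≥ q` a.s. for all `t ≥ 0`, then for all `T ≥ 1`,
`Pr(Σ_{t=1}^T Z_t² ≤ v²q²T/8) ≤ exp(−Tq²/8)`. -/
theorem stmt_11 {Ω : Type*} {m0 : MeasurableSpace Ω} (μ : Measure Ω) [IsProbabilityMeasure μ]
    (ℱ : Filtration ℕ m0) (Z : ℕ → Ω → ℝ) (hadapted : ∀ t : ℕ, 1 ≤ t → StronglyMeasurable[ℱ t] (Z t))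
    (v q : ℝ) (hv : 0 < v) (hq : 0 < q) (hq1 : q ≤ 1)
    (hBMSB : ∀ t : ℕ, ∀ᵐ ω ∂μ,
      q ≤ condExp (ℱ t) μ (Set.indicator {ω' | v ^ 2 < (Z (t + 1) ω') ^ 2} (fun _ => (1 : ℝ))) ω) :
    ∀ T : ℕ, 1 ≤ T →
      μ {ω | ∑ t ∈ Finset.Icc 1 T, (Z t ω) ^ 2 ≤ v ^ 2 * q ^ 2 * T / 8} ≤
        ENNReal.ofReal (Real.exp (-(T : ℝ) * q ^ 2 / 8)) := by
  classical
  -- the indicator variables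
  set B : ℕ → Ω → ℝ :=
    fun t => Set.indicator {ω' | v ^ 2 < (Z t ω') ^ 2} (fun _ => (1 : ℝ)) with hBdef
  have hB01 : ∀ t ω, B t ω = 0 ∨ B t ω = 1 := by
    intro t ω
    by_cases h : ω ∈ {ω' | v ^ 2 < (Z t ω') ^ 2}
    · right; simp [hBdef, Set.indicator_of_mem h]
    · left; simp [hBdef, Set.indicator_of_notMem h]
  have hBnonneg : ∀ t ω, 0 ≤ B t ω := by
    intro t ω; rcases hB01 t ω with h | h <;> rw [h] <;> norm_num
  have hBle1 : ∀ t ω, B t ω ≤ 1 := by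
    intro t ω; rcases hB01 t ω with h | h <;> rw [h] <;> norm_num
  have hBmeas : ∀ t : ℕ, 1 ≤ t → StronglyMeasurable[ℱ t] (B t) := by
    intro t ht
    have hset : MeasurableSet[ℱ t] {ω' | v ^ 2 < (Z t ω') ^ 2} := by
      have : Measurable[ℱ t] (fun ω => (Z t ω) ^ 2) :=
        ((hadapted t ht).measurable).pow_const 2
      exact this measurableSet_Ioi
    exact (stronglyMeasurable_const).indicator hset
  -- the constant c = 1 - e⁻¹, with 1/4 ≤ c < 1
  set c : ℝ := 1 - Real.exp (-1) with hcdef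
  have hexp1 : (2.7182818283 : ℝ) < Real.exp 1 := Real.exp_one_gt_d9
  have hc4 : (1 : ℝ) / 4 ≤ c := by
    have h1 : Real.exp (-1) = (Real.exp 1)⁻¹ := by
      rw [Real.exp_neg]
    have h2 : (Real.exp 1)⁻¹ ≤ 3 / 4 := by
      rw [inv_le_comm₀ (by positivity) (by norm_num)]
      linarith
    rw [hcdef, h1]; linarith
  have hc1 : c < 1 := by
    have := Real.exp_pos (-1)
    rw [hcdef]; linarith
  have hcq0 : 0 ≤ 1 - c * q := by
    nlinarith
  have hcq1 : 1 - c * q ≤ 1 := by nlinarith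
  -- the supermartingale-type product
  set P : ℕ → Ω → ℝ := fun n ω => ∏ t ∈ Finset.Icc 1 n, (1 - c * B t ω) with hPdef
  have hfac_nonneg : ∀ t ω, 0 ≤ 1 - c * B t ω := by
    intro t ω; nlinarith [hBnonneg t ω, hBle1 t ω, hBnonneg t ω]
  have hfac_le1 : ∀ t ω, 1 - c * B t ω ≤ 1 := by
    intro t ω; nlinarith [hBnonneg t ω]
  have hPnonneg : ∀ n ω, 0 ≤ P n ω := by
    intro n ω; exact Finset.prod_nonneg fun t _ => hfac_nonneg t ω
  have hPle1 : ∀ n ω, P n ω ≤ 1 :=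
    fun n ω => Finset.prod_le_one (fun t _ => hfac_nonneg t ω) (fun t _ => hfac_le1 t ω)
  have hPmeas : ∀ n : ℕ, StronglyMeasurable[ℱ n] (P n) := by
    intro n
    apply Finset.stronglyMeasurable_fun_prod
    intro t ht
    rw [Finset.mem_Icc] at ht
    have h1 : StronglyMeasurable[ℱ t] (fun ω => 1 - c * B t ω) :=
      stronglyMeasurable_const.sub (stronglyMeasurable_const.mul (hBmeas t ht.1))
    exact h1.mono (ℱ.mono ht.2)
  have hPint : ∀ n : ℕ, Integrable (P n) μ := by
    intro n
    refine Integrable.mono' (integrable_const 1)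
      (((hPmeas n).mono (ℱ.le n)).aestronglyMeasurable) (ae_of_all _ fun ω => ?_)
    rw [Real.norm_eq_abs, abs_of_nonneg (hPnonneg n ω)]
    exact hPle1 n ω
  have hBint : ∀ t : ℕ, 1 ≤ t → Integrable (B t) μ := by
    intro t ht
    refine Integrable.mono' (integrable_const 1)
      (((hBmeas t ht).mono (ℱ.le t)).aestronglyMeasurable) (ae_of_all _ fun ω => ?_)
    rw [Real.norm_eq_abs, abs_of_nonneg (hBnonneg t ω)]
    exact hBle1 t ω
  have hPBint : ∀ n : ℕ, Integrable (fun ω => P n ω * B (n + 1) ω) μ := by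
    intro n
    refine Integrable.mono' (integrable_const 1)
      ((((hPmeas n).mono (ℱ.le n)).mul
        ((hBmeas (n + 1) (by omega)).mono (ℱ.le (n + 1)))).aestronglyMeasurable)
      (ae_of_all _ fun ω => ?_)
    rw [Real.norm_eq_abs, abs_of_nonneg (mul_nonneg (hPnonneg n ω) (hBnonneg (n + 1) ω))]
    calc P n ω * B (n + 1) ω ≤ 1 * 1 :=
          mul_le_mul (hPle1 n ω) (hBle1 (n + 1) ω) (hBnonneg (n + 1) ω) zero_le_one
      _ = 1 := one_mul 1
  -- the key step: E[P (n+1)] ≤ (1 - c q) E[P n]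
  have hstep : ∀ n : ℕ, ∫ ω, P (n + 1) ω ∂μ ≤ (1 - c * q) * ∫ ω, P n ω ∂μ := by
    intro n
    have hsplit : ∀ ω, P (n + 1) ω = P n ω - c * (P n ω * B (n + 1) ω) := by
      intro ω
      rw [hPdef]
      simp only
      rw [Finset.prod_Icc_succ_top (by omega : 1 ≤ n + 1)]
      ring
    have hPB_condexp :
        ∫ ω, P n ω * B (n + 1) ω ∂μ = ∫ ω, (P n ω * (condExp (ℱ n) μ (B (n + 1))) ω) ∂μ := by
      have h1 : ∫ ω, P n ω * B (n + 1) ω ∂μ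
          = ∫ ω, (condExp (ℱ n) μ (fun ω' => P n ω' * B (n + 1) ω')) ω ∂μ :=
        (integral_condExp (ℱ.le n)).symm
      have h2 : condExp (ℱ n) μ (fun ω' => P n ω' * B (n + 1) ω')
          =ᵐ[μ] fun ω => P n ω * (condExp (ℱ n) μ (B (n + 1))) ω := by
        have := condExp_stronglyMeasurable_mul_of_bound (ℱ.le n) (hPmeas n)
          (hBint (n + 1) (by omega)) 1 (ae_of_all _ fun ω => by
            rw [Real.norm_eq_abs, abs_of_nonneg (hPnonneg n ω)]; exact hPle1 n ω)
        exact this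
      rw [h1]
      exact integral_congr_ae h2
    have hcondint : Integrable (fun ω => P n ω * (condExp (ℱ n) μ (B (n + 1))) ω) μ := by
      refine (integrable_condExp).bdd_mul (c := 1)
        (((hPmeas n).mono (ℱ.le n)).aestronglyMeasurable) (ae_of_all _ fun ω => ?_)
      rw [Real.norm_eq_abs, abs_of_nonneg (hPnonneg n ω)]; exact hPle1 n ω
    have hlower : q * ∫ ω, P n ω ∂μ ≤ ∫ ω, P n ω * B (n + 1) ω ∂μ := by
      rw [hPB_condexp, ← smul_eq_mul, ← integral_smul]
      refine integral_mono_ae ((hPint n).smul q) hcondint ?_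
      filter_upwards [hBMSB n] with ω hω
      simpa [smul_eq_mul, mul_comm] using mul_le_mul_of_nonneg_left hω (hPnonneg n ω)
    have hint_eq : ∫ ω, P (n + 1) ω ∂μ
        = ∫ ω, P n ω ∂μ - c * ∫ ω, P n ω * B (n + 1) ω ∂μ := by
      rw [show (fun ω => P (n + 1) ω) = fun ω => P n ω - c * (P n ω * B (n + 1) ω) from
        funext hsplit]
      rw [integral_sub (hPint n) ((hPBint n).const_mul c), integral_const_mul]
    have hc0 : 0 ≤ c := le_trans (by norm_num) hc4
    rw [hint_eq]
    have := mul_le_mul_of_nonneg_left hlower hc0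
    nlinarith
  -- induction: E[P n] ≤ (1 - c q)^n
  have hind : ∀ n : ℕ, ∫ ω, P n ω ∂μ ≤ (1 - c * q) ^ n := by
    intro n
    induction n with
    | zero =>
        simp only [hPdef]
        norm_num
    | succ n ih =>
        calc ∫ ω, P (n + 1) ω ∂μ ≤ (1 - c * q) * ∫ ω, P n ω ∂μ := hstep n
          _ ≤ (1 - c * q) * (1 - c * q) ^ n := mul_le_mul_of_nonneg_left ih hcq0
          _ = (1 - c * q) ^ (n + 1) := (pow_succ' _ _).symm
  -- now the Markov argument
  intro T hT
  set A : Set Ω := {ω | ∑ t ∈ Finset.Icc 1 T, (Z t ω) ^ 2 ≤ v ^ 2 * q ^ 2 * T / 8} with hAdef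
  set ε : ℝ := Real.exp (-(q ^ 2 * T / 8)) with hεdef
  have hεpos : 0 < ε := Real.exp_pos _
  -- on A, P T ≥ ε
  have hPA : ∀ ω ∈ A, ε ≤ P T ω := by
    intro ω hω
    -- P T ω = exp(-(∑ B t ω))
    have hPexp : P T ω = Real.exp (-(∑ t ∈ Finset.Icc 1 T, B t ω)) := by
      rw [hPdef]
      simp only
      rw [← Finset.sum_neg_distrib, Real.exp_sum]
      refine Finset.prod_congr rfl fun t _ => ?_
      rcases hB01 t ω with h | h
      · rw [h]; simp
      · rw [h, hcdef]; simp
    -- the count is at most q² T / 8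
    have hcount : ∑ t ∈ Finset.Icc 1 T, B t ω ≤ q ^ 2 * T / 8 := by
      have h1 : v ^ 2 * ∑ t ∈ Finset.Icc 1 T, B t ω ≤ ∑ t ∈ Finset.Icc 1 T, (Z t ω) ^ 2 := by
        rw [Finset.mul_sum]
        refine Finset.sum_le_sum fun t _ => ?_
        rcases hB01 t ω with h | h
        · rw [h]; simpa using sq_nonneg (Z t ω)
        · have : ω ∈ {ω' | v ^ 2 < (Z t ω') ^ 2} := by
            by_contra hmem
            rw [hBdef] at h
            simp [Set.indicator_of_notMem hmem] at h
          rw [h, mul_one]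
          exact le_of_lt this
      have h2 : ∑ t ∈ Finset.Icc 1 T, (Z t ω) ^ 2 ≤ v ^ 2 * q ^ 2 * T / 8 := hω
      have hv2 : 0 < v ^ 2 := by positivity
      nlinarith
    rw [hPexp]
    apply Real.exp_le_exp.2
    linarith
  -- Markov's inequality
  have hmarkov : ε * (μ A).toReal ≤ (1 - c * q) ^ T := by
    have hsub : A ⊆ {ω | ε ≤ P T ω} := fun ω hω => hPA ω hω
    have h1 : ε * (μ A).toReal ≤ ε * (μ {ω | ε ≤ P T ω}).toReal := by
      apply mul_le_mul_of_nonneg_left _ hεpos.le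
      apply ENNReal.toReal_mono (measure_ne_top μ _)
      exact measure_mono hsub
    have h2 := mul_meas_ge_le_integral_of_nonneg
      (ae_of_all μ fun ω => hPnonneg T ω) (hPint T) ε
    calc ε * (μ A).toReal ≤ ε * (μ {ω | ε ≤ P T ω}).toReal := h1
      _ ≤ ∫ ω, P T ω ∂μ := h2
      _ ≤ (1 - c * q) ^ T := hind T
  -- final arithmetic
  have hfinal : (μ A).toReal ≤ Real.exp (-(T : ℝ) * q ^ 2 / 8) := by
    have h1 : (1 - c * q) ^ T ≤ Real.exp (-(c * q) * T) := by
      calc (1 - c * q) ^ T ≤ (Real.exp (-(c * q))) ^ T := by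
            apply pow_le_pow_left₀ hcq0
            have := Real.add_one_le_exp (-(c * q))
            linarith
        _ = Real.exp (-(c * q) * T) := by
            rw [mul_comm (-(c * q)) (T : ℝ), Real.exp_nat_mul]
      -- need (T : ℝ) as nat cast; exp_nat_mul : exp (n * x) = exp x ^ n
    have h2 : Real.exp (-(c * q) * T) ≤ Real.exp (-(q ^ 2 * T / 4)) := by
      apply Real.exp_le_exp.2
      have hT0 : (0 : ℝ) ≤ T := Nat.cast_nonneg T
      have hqT : 0 ≤ q * T := mul_nonneg hq.le hT0
      nlinarith [mul_le_mul_of_nonneg_right hc4 hqT, mul_le_mul_of_nonneg_right hq1 hqT]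
    have h3 : (1 - c * q) ^ T ≤ ε * Real.exp (-(T : ℝ) * q ^ 2 / 8) := by
      have : ε * Real.exp (-(T : ℝ) * q ^ 2 / 8) = Real.exp (-(q ^ 2 * T / 4)) := by
        rw [hεdef, ← Real.exp_add]
        ring_nf
      rw [this]
      exact le_trans h1 h2
    have h4 : ε * (μ A).toReal ≤ ε * Real.exp (-(T : ℝ) * q ^ 2 / 8) :=
      le_trans hmarkov h3
    exact le_of_mul_le_mul_left h4 hεpos
  calc μ A = ENNReal.ofReal ((μ A).toReal) := (ENNReal.ofReal_toReal (measure_ne_top μ A)).symm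
    _ ≤ ENNReal.ofReal (Real.exp (-(T : ℝ) * q ^ 2 / 8)) := ENNReal.ofReal_le_ofReal hfinal
end
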